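/- Consider the complete k-ary tree T with ℓ levels of nodes (k ≥ 2), let h̃ : nodes(T) → ℝ, and let h̄ be the unique minimizer of Σ_v (t[v] − h̃[v])² over all t satisfying t[v] = Σ_{u ∈ children(v)} t[u] for every internal node v. Then the value of h̄ at the root r equals h̄[r] = ((k−1)/(k^ℓ − 1)) · Σ_{i=0}^{ℓ−1} k^i · Σ_{v ∈ level(i)} h̃[v], where level(i) denotes the set of nodes at height i+1 (level(0) is the set of leaves and level(ℓ−1) = {r}). -/

import Mathlib

/-- A node of the complete `k`-ary tree with `ℓ` levels of nodes: a depth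
`d ∈ {0, …, ℓ−1}` (root depth `0`, leaves depth `ℓ−1`) and an index among the
`k^d` nodes at that depth.  `level(i)` is the set of nodes at depth `ℓ−1−i`. -/
abbrev TreeNode (k ℓ : ℕ) : Type := Σ d : Fin ℓ, Fin (k ^ (d : ℕ))

/-- The node at depth `d` with index `j`. -/
def mkNode {k ℓ : ℕ} (d : ℕ) (hd : d < ℓ) (j : Fin (k ^ d)) : TreeNode k ℓ := ⟨⟨d, hd⟩, j⟩

/-- The `r`-th child of the node at depth `d` with index `j`. -/
def childNode {k ℓ : ℕ} (d : ℕ) (hd : d + 1 < ℓ) (j : Fin (k ^ d)) (r : Fin k) :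
    TreeNode k ℓ :=
  ⟨⟨d + 1, hd⟩, ⟨(j : ℕ) * k + (r : ℕ), by
    have hj := j.isLt
    have hr := r.isLt
    calc (j : ℕ) * k + (r : ℕ) < ((j : ℕ) + 1) * k := by nlinarith
      _ ≤ k ^ d * k := Nat.mul_le_mul_right _ (by omega)
      _ = k ^ (d + 1) := (pow_succ k d).symm⟩⟩

/-- A node-value vector is consistent if every internal node's value equals the sum of
its children's values. -/
def Consistent {k ℓ : ℕ} (t : TreeNode k ℓ → ℝ) : Prop :=
  ∀ (d : ℕ) (hd : d + 1 < ℓ) (j : Fin (k ^ d)),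
    t (mkNode d (by omega) j) = ∑ r : Fin k, t (childNode d hd j r)

/-- Weight vector: value `k ^ (ℓ - 1 - depth)` at every node. -/
def wtv (k ℓ : ℕ) : TreeNode k ℓ → ℝ := fun v => (k : ℝ) ^ (ℓ - 1 - (v.1 : ℕ))

lemma wtv_consistent (k ℓ : ℕ) : Consistent (wtv k ℓ) := by
  intro d hd j
  simp only [wtv, mkNode, childNode, Finset.sum_const, Finset.card_univ, Fintype.card_fin,
    nsmul_eq_mul]
  have h1 : ℓ - 1 - d = (ℓ - 1 - (d + 1)) + 1 := by omega
  rw [h1, pow_succ]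
  ring

lemma consistent_add_smul {k ℓ : ℕ} (t w : TreeNode k ℓ → ℝ)
    (htc : Consistent t) (hwc : Consistent w) (s : ℝ) :
    Consistent (fun v => t v + s * w v) := by
  intro d hd j
  simp only []
  rw [htc d hd j, hwc d hd j, Finset.mul_sum, ← Finset.sum_add_distrib]

/-- The map `(j, r) ↦ j * k + r` from `Fin (k^d) × Fin k` to `Fin (k^(d+1))`. -/
def childIdx {k d : ℕ} (p : Fin (k ^ d) × Fin k) : Fin (k ^ (d + 1)) :=
  ⟨(p.1 : ℕ) * k + (p.2 : ℕ), by
    have hj := p.1.isLt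
    have hr := p.2.isLt
    calc (p.1 : ℕ) * k + (p.2 : ℕ) < ((p.1 : ℕ) + 1) * k := by nlinarith
      _ ≤ k ^ d * k := Nat.mul_le_mul_right _ (by omega)
      _ = k ^ (d + 1) := (pow_succ k d).symm⟩

lemma childIdx_bijective (k d : ℕ) (hk : 1 ≤ k) :
    Function.Bijective (childIdx (k := k) (d := d)) := by
  rw [Fintype.bijective_iff_injective_and_card]
  constructor
  · rintro ⟨j₁, r₁⟩ ⟨j₂, r₂⟩ h
    have h' : (j₁ : ℕ) * k + (r₁ : ℕ) = (j₂ : ℕ) * k + (r₂ : ℕ) :=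
      congrArg Fin.val h
    have hr₁ := r₁.isLt
    have hr₂ := r₂.isLt
    have hj : (j₁ : ℕ) = (j₂ : ℕ) := by
      rcases Nat.lt_trichotomy (j₁ : ℕ) (j₂ : ℕ) with h'' | h'' | h''
      · nlinarith
      · exact h''
      · nlinarith
    have hr : (r₁ : ℕ) = (r₂ : ℕ) := by rw [hj] at h'; omega
    exact Prod.ext (Fin.ext hj) (Fin.ext hr)
  · simp [pow_succ]

/-- For a consistent vector, the sum over every level equals the root value. -/
lemma level_sum_eq_root {k ℓ : ℕ} (hk : 1 ≤ k) (hℓ : 1 ≤ ℓ) (t : TreeNode k ℓ → ℝ)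
    (htc : Consistent t) :
    ∀ (d : ℕ) (hd : d < ℓ),
      (∑ j : Fin (k ^ d), t ⟨⟨d, hd⟩, j⟩) = t ⟨⟨0, hℓ⟩, ⟨0, pow_pos hk _⟩⟩ := by
  intro d
  induction d with
  | zero =>
    intro hd
    have : ∀ j : Fin (k ^ 0), j = (⟨0, pow_pos hk _⟩ : Fin (k ^ 0)) := by
      intro j
      have := j.isLt
      exact Fin.ext (by simp only [pow_zero] at this; show (j : ℕ) = 0; omega)
    rw [show (Finset.univ : Finset (Fin (k ^ 0))) = {⟨0, pow_pos hk _⟩} from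
      Finset.eq_singleton_iff_unique_mem.mpr ⟨Finset.mem_univ _, fun j _ => this j⟩]
    rw [Finset.sum_singleton]
  | succ d ih =>
    intro hd
    have hd' : d < ℓ := by omega
    have key : (∑ j : Fin (k ^ (d + 1)), t ⟨⟨d + 1, hd⟩, j⟩)
        = ∑ p : Fin (k ^ d) × Fin k, t ⟨⟨d + 1, hd⟩, childIdx p⟩ :=
      (Fintype.sum_bijective childIdx (childIdx_bijective k d hk)
        (fun p => t ⟨⟨d + 1, hd⟩, childIdx p⟩) (fun j => t ⟨⟨d + 1, hd⟩, j⟩)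
        (fun p => rfl)).symm
    rw [key, Fintype.sum_prod_type]
    have : ∀ j : Fin (k ^ d), (∑ r : Fin k, t ⟨⟨d + 1, hd⟩, childIdx (j, r)⟩) = t ⟨⟨d, hd'⟩, j⟩ := by
      intro j
      exact (htc d hd j).symm
    rw [Finset.sum_congr rfl (fun j _ => this j)]
    exact ih hd'

/-- Orthogonality: the residual of the minimizer is orthogonal to every consistent vector. -/
lemma residual_orthogonal {k ℓ : ℕ} (ht hb : TreeNode k ℓ → ℝ)
    (hbcons : Consistent hb)
    (hbmin : ∀ t : TreeNode k ℓ → ℝ, Consistent t →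
      ∑ v, (hb v - ht v) ^ 2 ≤ ∑ v, (t v - ht v) ^ 2)
    (w : TreeNode k ℓ → ℝ) (hwc : Consistent w) :
    ∑ v, w v * (hb v - ht v) = 0 := by
  set c := ∑ v, w v * (hb v - ht v) with hc
  set W := ∑ v, (w v) ^ 2 with hW
  have key : ∀ s : ℝ, 0 ≤ 2 * s * c + s ^ 2 * W := by
    intro s
    have h := hbmin (fun v => hb v + s * w v) (consistent_add_smul hb w hbcons hwc s)
    have expand : (∑ v, ((fun v => hb v + s * w v) v - ht v) ^ 2)
        = (∑ v, (hb v - ht v) ^ 2) + (2 * s * c + s ^ 2 * W) := by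
      rw [hc, hW, Finset.mul_sum, Finset.mul_sum, ← Finset.sum_add_distrib,
        ← Finset.sum_add_distrib]
      refine Finset.sum_congr rfl fun v _ => by ring
    rw [expand] at h
    linarith
  have hW0 : 0 ≤ W := Finset.sum_nonneg fun v _ => sq_nonneg _
  rcases eq_or_lt_of_le hW0 with hW1 | hW1
  · have : ∀ v ∈ Finset.univ, (w v) ^ 2 = 0 := by
      intro v _
      exact (Finset.sum_eq_zero_iff_of_nonneg (fun v _ => sq_nonneg _)).mp hW1.symm v (Finset.mem_univ v)
    have hw0 : ∀ v, w v = 0 := fun v => pow_eq_zero_iff (n := 2) (by norm_num) |>.mp (this v (Finset.mem_univ v))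
    simp [hc, hw0]
  · by_contra hc0
    have h := key (-c / W)
    have : 2 * (-c / W) * c + (-c / W) ^ 2 * W = -(c ^ 2 / W) := by
      field_simp
      ring
    rw [this] at h
    have : c ^ 2 / W ≤ 0 := by linarith
    have : c ^ 2 ≤ 0 := by
      rw [div_nonpos_iff] at this
      rcases this with ⟨h1, h2⟩ | ⟨h1, h2⟩
      · linarith
      · exact h1
    exact hc0 (by nlinarith [sq_nonneg c])

/-- **Root value of the minimum `L₂` consistent solution.**
If `h̄` is the unique minimizer of `Σ_v (t[v] − h̃[v])²` over all consistent `t`, then at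
the root `r`, `h̄[r] = ((k−1)/(k^ℓ − 1)) · Σ_{i=0}^{ℓ−1} k^i · Σ_{v ∈ level(i)} h̃[v]`,
where `level(i)` is the set of nodes at depth `ℓ−1−i` (so `level(0)` is the leaves and
`level(ℓ−1)` is the root). -/
theorem tree_inference_root_value (k ℓ : ℕ) (hk : 2 ≤ k) (hℓ : 1 ≤ ℓ)
    (ht hb : TreeNode k ℓ → ℝ)
    (hbcons : Consistent hb)
    (hbmin : ∀ t : TreeNode k ℓ → ℝ, Consistent t →
      ∑ v, (hb v - ht v) ^ 2 ≤ ∑ v, (t v - ht v) ^ 2) :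
    hb (mkNode 0 (by omega) ⟨0, by simp⟩)
      = (((k : ℝ) - 1) / ((k : ℝ) ^ ℓ - 1))
          * ∑ i ∈ Finset.range ℓ,
              (k : ℝ) ^ i * ∑ j : Fin (k ^ (ℓ - 1 - i)), ht (mkNode (ℓ - 1 - i) (by omega) j) := by
  have hk' : 1 ≤ k := by omega
  have hk1 : (1 : ℝ) < (k : ℝ) := by exact_mod_cast (by omega : 1 < k)
  have hkl : (1 : ℝ) < (k : ℝ) ^ ℓ := one_lt_pow₀ hk1 (by omega)
  have hknz : (k : ℝ) - 1 ≠ 0 := by linarith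
  have hklnz : (k : ℝ) ^ ℓ - 1 ≠ 0 := by linarith
  have orth := residual_orthogonal ht hb hbcons hbmin (wtv k ℓ) (wtv_consistent k ℓ)
  have horth : (∑ v, wtv k ℓ v * hb v) = ∑ v, wtv k ℓ v * ht v := by
    have h0 : (∑ v, (wtv k ℓ v * hb v - wtv k ℓ v * ht v)) = 0 := by
      rw [← orth]; exact Finset.sum_congr rfl fun v _ => by ring
    rw [Finset.sum_sub_distrib] at h0
    linarith
  set root : TreeNode k ℓ := ⟨⟨0, hℓ⟩, ⟨0, pow_pos hk' _⟩⟩ with hroot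
  -- left side: weighted sum of hb equals (geometric sum) * root value
  have hL : (∑ v, wtv k ℓ v * hb v) = (∑ i ∈ Finset.range ℓ, (k : ℝ) ^ i) * hb root := by
    rw [← Finset.univ_sigma_univ, Finset.sum_sigma]
    have step : ∀ d : Fin ℓ, (∑ j : Fin (k ^ (d : ℕ)), wtv k ℓ ⟨d, j⟩ * hb ⟨d, j⟩)
        = (k : ℝ) ^ (ℓ - 1 - (d : ℕ)) * hb root := by
      intro d
      simp only [wtv]
      rw [← Finset.mul_sum]
      congr 1
      exact level_sum_eq_root hk' hℓ hb hbcons (d : ℕ) d.isLt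
    rw [Finset.sum_congr rfl fun d _ => step d, ← Finset.sum_mul]
    congr 1
    rw [Fin.sum_univ_eq_sum_range (fun d => (k : ℝ) ^ (ℓ - 1 - d)) ℓ]
    exact Finset.sum_range_reflect (fun i => (k : ℝ) ^ i) ℓ
  -- right side: weighted sum of ht equals the big sum in the goal
  set S : ℕ → ℝ := fun d => if h : d < ℓ then ∑ j : Fin (k ^ d), ht ⟨⟨d, h⟩, j⟩ else 0 with hS
  have hR : (∑ v, wtv k ℓ v * ht v)
      = ∑ i ∈ Finset.range ℓ,
          (k : ℝ) ^ i * ∑ j : Fin (k ^ (ℓ - 1 - i)), ht (mkNode (ℓ - 1 - i) (by omega) j) := by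
    rw [← Finset.univ_sigma_univ, Finset.sum_sigma]
    have step : ∀ d : Fin ℓ, (∑ j : Fin (k ^ (d : ℕ)), wtv k ℓ ⟨d, j⟩ * ht ⟨d, j⟩)
        = (k : ℝ) ^ (ℓ - 1 - (d : ℕ)) * S (d : ℕ) := by
      intro d
      simp only [wtv]
      rw [← Finset.mul_sum]
      congr 1
      have hSd : S (d : ℕ) = ∑ j : Fin (k ^ (d : ℕ)), ht ⟨⟨(d : ℕ), d.isLt⟩, j⟩ :=
        dif_pos d.isLt
      rw [hSd]
    rw [Finset.sum_congr rfl fun d _ => step d,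
      Fin.sum_univ_eq_sum_range (fun d => (k : ℝ) ^ (ℓ - 1 - d) * S d) ℓ,
      ← Finset.sum_range_reflect (fun d => (k : ℝ) ^ (ℓ - 1 - d) * S d) ℓ]
    refine Finset.sum_congr rfl fun i hi => ?_
    have hi' : i < ℓ := Finset.mem_range.mp hi
    have e1 : ℓ - 1 - (ℓ - 1 - i) = i := by omega
    rw [e1]
    have hSi : S (ℓ - 1 - i)
        = ∑ j : Fin (k ^ (ℓ - 1 - i)), ht (mkNode (ℓ - 1 - i) (show ℓ - 1 - i < ℓ by omega) j) :=
      dif_pos (show ℓ - 1 - i < ℓ by omega)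
    rw [hSi]
  have hgeom : (∑ i ∈ Finset.range ℓ, (k : ℝ) ^ i) = ((k : ℝ) ^ ℓ - 1) / ((k : ℝ) - 1) :=
    geom_sum_eq (ne_of_gt hk1) ℓ
  have key : (((k : ℝ) ^ ℓ - 1) / ((k : ℝ) - 1)) * hb root
      = ∑ i ∈ Finset.range ℓ,
          (k : ℝ) ^ i * ∑ j : Fin (k ^ (ℓ - 1 - i)), ht (mkNode (ℓ - 1 - i) (by omega) j) := by
    rw [← hgeom, ← hL, horth, hR]
  show hb root = _
  rw [← key]
  field_simp
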